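/- If πr(X) ≤ 1 almost surely (i.e., r bounded above by 1/π), then the quadratic Bregman divergence equals the squared-loss excess risk up to scaling: (2π²/μ) B_{f_S}(r* ∥ r) = R_sq(2πr − 1) − R*_sq. -/

import Mathlib

open MeasureTheory Real

/-- The sign function mapping to `{±1}`. -/
noncomputable def sgn (x : ℝ) : ℝ := if 0 < x then 1 else -1

/-- Cost-sensitive classification risk with class-prior `pr` and false-positive cost `c`,
for class-conditional distributions `Pp` (positive) and `Pm` (negative). -/
noncomputable def costRisk {d : ℕ} (Pp Pm : Measure (Fin d → ℝ)) (pr c : ℝ)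
    (g : (Fin d → ℝ) → ℝ) : ℝ :=
  (1 - c) * pr * (Pp {x | sgn (g x) ≠ 1}).toReal
    + c * (1 - pr) * (Pm {x | sgn (g x) ≠ -1}).toReal

/-- Bayes-optimal cost-sensitive risk: infimum over all measurable decision functions. -/
noncomputable def bayesRisk {d : ℕ} (Pp Pm : Measure (Fin d → ℝ)) (pr c : ℝ) : ℝ :=
  ⨅ g : {g : (Fin d → ℝ) → ℝ // Measurable g}, costRisk Pp Pm pr c g.1

/-- Bregman divergence `B_f(r* ∥ r)` weighted by the distribution `P`. -/
noncomputable def bregman {d : ℕ} (P : Measure (Fin d → ℝ)) (f : ℝ → ℝ)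
    (rstar r : (Fin d → ℝ) → ℝ) : ℝ :=
  ∫ x, (f (rstar x) - f (r x) - deriv f (r x) * (rstar x - r x)) ∂P

/-- Squared-loss classification risk with class-prior `pr`. -/
noncomputable def sqRisk {d : ℕ} (Pp Pm : Measure (Fin d → ℝ)) (pr : ℝ)
    (g : (Fin d → ℝ) → ℝ) : ℝ :=
  pr * ∫ x, (g x - 1) ^ 2 / 4 ∂Pp + (1 - pr) * ∫ x, (g x + 1) ^ 2 / 4 ∂Pm

open scoped NNReal ENNReal

/-- A measurable function a.e. bounded on a finite measure is integrable. -/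
lemma integrable_of_ae_abs_le {α : Type*} [MeasurableSpace α] {ν : Measure α}
    [IsFiniteMeasure ν] {g : α → ℝ} (hg : AEStronglyMeasurable g ν) {C : ℝ}
    (h : ∀ᵐ x ∂ν, |g x| ≤ C) : Integrable g ν :=
  Integrable.mono' (integrable_const C) hg (by simpa [Real.norm_eq_abs] using h)

set_option maxHeartbeats 1000000

/-- when `pr · r ≤ 1` a.s., the quadratic Bregman divergence equals the
squared-loss excess risk up to scaling. -/
theorem quadratic_bregman_eq_sq_excess {d : ℕ} (Pp Pm P : Measure (Fin d → ℝ))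
    [IsProbabilityMeasure Pp] [IsProbabilityMeasure Pm] [IsProbabilityMeasure P]
    (pr μ : ℝ) (hpr : pr ∈ Set.Ioo (0:ℝ) 1) (hμ : 0 < μ)
    (rstar r : (Fin d → ℝ) → ℝ) (hrstar : Measurable rstar) (hr : Measurable r)
    (hrstar0 : ∀ x, 0 ≤ rstar x) (hr0 : ∀ x, 0 ≤ r x)
    (hmix : P = ENNReal.ofReal pr • Pp + ENNReal.ofReal (1 - pr) • Pm)
    (hratio : ∀ S : Set (Fin d → ℝ), MeasurableSet S →
      (Pp S).toReal = ∫ x in S, rstar x ∂P)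
    (hint : Integrable (fun x => μ * (rstar x - r x) ^ 2 / 2) P)
    (hbound : ∀ᵐ x ∂P, pr * r x ≤ 1) :
    (2 * pr ^ 2 / μ) * bregman P (fun t => μ * t ^ 2 / 2) rstar r
      = sqRisk Pp Pm pr (fun x => 2 * (pr * r x) - 1)
        - sqRisk Pp Pm pr (fun x => 2 * (pr * rstar x) - 1) := by
  obtain ⟨hpr0, hpr1⟩ := hpr
  -- rstar is integrable w.r.t. P
  have hrsint : Integrable rstar P := by
    by_contra h
    have h1 := hratio Set.univ MeasurableSet.univ
    rw [Measure.restrict_univ, integral_undef h] at h1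
    simp at h1
  -- pr * rstar ≤ 1 a.e. P
  have hbstar : ∀ᵐ x ∂P, pr * rstar x ≤ 1 := by
    refine ae_le_of_forall_setIntegral_le (μ := P)
      (f := fun x => pr * rstar x) (g := fun _ => (1:ℝ))
      (hrsint.const_mul pr) (integrable_const 1) ?_
    intro s hs _
    rw [integral_const_mul, ← hratio s hs, setIntegral_const, smul_eq_mul, mul_one]
    have h1 : P s = ENNReal.ofReal pr * Pp s + ENNReal.ofReal (1 - pr) * Pm s := by
      rw [hmix]; simp [Measure.add_apply]
    have h2 : ENNReal.ofReal pr * Pp s ≤ P s := by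
      rw [h1]; exact le_add_of_nonneg_right zero_le
    have h3 : (ENNReal.ofReal pr * Pp s).toReal ≤ (P s).toReal :=
      ENNReal.toReal_mono (measure_ne_top _ _) h2
    rwa [ENNReal.toReal_mul, ENNReal.toReal_ofReal hpr0.le] at h3
  -- absolute continuity
  have hacp : Pp ≪ P := by
    intro s hs
    rw [hmix] at hs
    simp only [Measure.coe_add, Pi.add_apply, Measure.coe_smul, Pi.smul_apply,
      smul_eq_mul, add_eq_zero, mul_eq_zero] at hs
    rcases hs.1 with h | h
    · exact absurd h (by simp [ENNReal.ofReal_eq_zero, not_le, hpr0])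
    · exact h
  have hacm : Pm ≪ P := by
    intro s hs
    rw [hmix] at hs
    simp only [Measure.coe_add, Pi.add_apply, Measure.coe_smul, Pi.smul_apply,
      smul_eq_mul, add_eq_zero, mul_eq_zero] at hs
    rcases hs.2 with h | h
    · exact absurd h (by simp [ENNReal.ofReal_eq_zero, not_le]; linarith)
    · exact h
  -- combined a.e. bounds
  have hballP : ∀ᵐ x ∂P, pr * r x ≤ 1 ∧ pr * rstar x ≤ 1 := hbound.and hbstar
  have hballp : ∀ᵐ x ∂Pp, pr * r x ≤ 1 ∧ pr * rstar x ≤ 1 := hacp.ae_le hballP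
  have hballm : ∀ᵐ x ∂Pm, pr * r x ≤ 1 ∧ pr * rstar x ≤ 1 := hacm.ae_le hballP
  -- density representation
  have hwd : Pp = P.withDensity (fun x => ENNReal.ofReal (rstar x)) := by
    ext s hs
    rw [withDensity_apply _ hs,
      ← ofReal_integral_eq_lintegral_ofReal hrsint.integrableOn
        (Filter.Eventually.of_forall fun x => hrstar0 x),
      ← hratio s hs, ENNReal.ofReal_toReal (measure_ne_top _ _)]
  have hdens : ∀ h : (Fin d → ℝ) → ℝ, ∫ x, h x ∂Pp = ∫ x, rstar x * h x ∂P := by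
    intro h
    rw [hwd]
    have he : (fun x => ENNReal.ofReal (rstar x))
        = fun x => ((Real.toNNReal (rstar x) : ℝ≥0) : ℝ≥0∞) := rfl
    rw [he, integral_withDensity_eq_integral_smul hrstar.real_toNNReal h]
    congr 1
    ext x
    simp [NNReal.smul_def, Real.coe_toNNReal _ (hrstar0 x)]
  -- mixture formula
  have hmixint : ∀ h : (Fin d → ℝ) → ℝ, Integrable h Pp → Integrable h Pm →
      ∫ x, h x ∂P = pr * ∫ x, h x ∂Pp + (1 - pr) * ∫ x, h x ∂Pm := by
    intro h h1 h2
    rw [hmix, integral_add_measure (h1.smul_measure ENNReal.ofReal_ne_top)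
        (h2.smul_measure ENNReal.ofReal_ne_top),
      integral_smul_measure, integral_smul_measure,
      ENNReal.toReal_ofReal hpr0.le, ENNReal.toReal_ofReal (by linarith)]
    simp [smul_eq_mul]
  -- integrability of everything we need
  have m1 : Measurable fun x => (pr * r x) ^ 2 - (pr * rstar x) ^ 2 :=
    ((hr.const_mul pr).pow_const 2).sub ((hrstar.const_mul pr).pow_const 2)
  have m2 : Measurable fun x => r x - rstar x := hr.sub hrstar
  have m3 : Measurable fun x => rstar x * (r x - rstar x) := hrstar.mul m2
  have m4 : Measurable fun x => (pr * r x - 1) ^ 2 :=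
    ((hr.const_mul pr).sub measurable_const).pow_const 2
  have m5 : Measurable fun x => (pr * rstar x - 1) ^ 2 :=
    ((hrstar.const_mul pr).sub measurable_const).pow_const 2
  have m6 : Measurable fun x => (pr * r x) ^ 2 := (hr.const_mul pr).pow_const 2
  have m7 : Measurable fun x => (pr * rstar x) ^ 2 := (hrstar.const_mul pr).pow_const 2
  have hmr : ∀ᵐ x ∂P, |(pr * r x) ^ 2 - (pr * rstar x) ^ 2| ≤ 1 := by
    filter_upwards [hballP] with x ⟨h1, h2⟩
    have := hr0 x; have := hrstar0 x
    rw [abs_le]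
    constructor <;> nlinarith [mul_nonneg hpr0.le (hr0 x), mul_nonneg hpr0.le (hrstar0 x)]
  have hD_P : Integrable (fun x => (pr * r x) ^ 2 - (pr * rstar x) ^ 2) P :=
    integrable_of_ae_abs_le (C := 1) (m1.aestronglyMeasurable) hmr
  have hD_p : Integrable (fun x => (pr * r x) ^ 2 - (pr * rstar x) ^ 2) Pp :=
    integrable_of_ae_abs_le (C := 1) (m1.aestronglyMeasurable) (by
      filter_upwards [hballp] with x ⟨h1, h2⟩
      rw [abs_le]
      constructor <;> nlinarith [mul_nonneg hpr0.le (hr0 x), mul_nonneg hpr0.le (hrstar0 x)])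
  have hD_m : Integrable (fun x => (pr * r x) ^ 2 - (pr * rstar x) ^ 2) Pm :=
    integrable_of_ae_abs_le (C := 1) (m1.aestronglyMeasurable) (by
      filter_upwards [hballm] with x ⟨h1, h2⟩
      rw [abs_le]
      constructor <;> nlinarith [mul_nonneg hpr0.le (hr0 x), mul_nonneg hpr0.le (hrstar0 x)])
  have hE_p : Integrable (fun x => r x - rstar x) Pp :=
    integrable_of_ae_abs_le (C := 2 / pr) (m2.aestronglyMeasurable) (by
      filter_upwards [hballp] with x ⟨h1, h2⟩
      have hrx : r x ≤ 1 / pr := by rw [le_div_iff₀ hpr0]; linarith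
      have hsx : rstar x ≤ 1 / pr := by rw [le_div_iff₀ hpr0]; linarith
      rw [abs_le]
      have h3 : (0:ℝ) < 1 / pr := by positivity
      have h4 : 2 / pr = 1 / pr + 1 / pr := by ring
      constructor <;> [linarith [hr0 x, hrstar0 x]; linarith [hr0 x, hrstar0 x]])
  have hsE_P : Integrable (fun x => rstar x * (r x - rstar x)) P :=
    integrable_of_ae_abs_le (C := 2 / pr ^ 2) (m3.aestronglyMeasurable) (by
      filter_upwards [hballP] with x ⟨h1, h2⟩
      have hrx : r x ≤ 1 / pr := by rw [le_div_iff₀ hpr0]; linarith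
      have hsx : rstar x ≤ 1 / pr := by rw [le_div_iff₀ hpr0]; linarith
      have h3 : (0:ℝ) < 1 / pr := by positivity
      rw [abs_mul, abs_of_nonneg (hrstar0 x)]
      have h5 : 2 / pr = 1 / pr + 1 / pr := by ring
      have h4 : |r x - rstar x| ≤ 2 / pr := by
        rw [abs_le]; constructor <;> [linarith [hr0 x, hrstar0 x]; linarith [hr0 x, hrstar0 x]]
      calc rstar x * |r x - rstar x| ≤ (1 / pr) * (2 / pr) :=
            mul_le_mul hsx h4 (abs_nonneg _) h3.le
        _ = 2 / pr ^ 2 := by ring)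
  have hsq_P : Integrable (fun x => (rstar x - r x) ^ 2) P := by
    have := hint.const_mul (2 / μ)
    refine this.congr (Filter.Eventually.of_forall fun x => ?_)
    field_simp
  have hf1_p : Integrable (fun x => (pr * r x - 1) ^ 2) Pp :=
    integrable_of_ae_abs_le (C := 1) (m4.aestronglyMeasurable) (by
      filter_upwards [hballp] with x ⟨h1, h2⟩
      rw [abs_le]
      constructor <;> nlinarith [mul_nonneg hpr0.le (hr0 x)])
  have hf2_p : Integrable (fun x => (pr * rstar x - 1) ^ 2) Pp :=
    integrable_of_ae_abs_le (C := 1) (m5.aestronglyMeasurable) (by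
      filter_upwards [hballp] with x ⟨h1, h2⟩
      rw [abs_le]
      constructor <;> nlinarith [mul_nonneg hpr0.le (hrstar0 x)])
  have hg1_m : Integrable (fun x => (pr * r x) ^ 2) Pm :=
    integrable_of_ae_abs_le (C := 1) (m6.aestronglyMeasurable) (by
      filter_upwards [hballm] with x ⟨h1, h2⟩
      rw [abs_le]
      constructor <;> nlinarith [mul_nonneg hpr0.le (hr0 x)])
  have hg2_m : Integrable (fun x => (pr * rstar x) ^ 2) Pm :=
    integrable_of_ae_abs_le (C := 1) (m7.aestronglyMeasurable) (by
      filter_upwards [hballm] with x ⟨h1, h2⟩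
      rw [abs_le]
      constructor <;> nlinarith [mul_nonneg hpr0.le (hrstar0 x)])
  -- compute the Bregman divergence
  have hderiv : ∀ a : ℝ, deriv (fun t : ℝ => μ * t ^ 2 / 2) a = μ * a := by
    intro a
    have h : HasDerivAt (fun t : ℝ => μ * t ^ 2 / 2) (μ * (2 * a ^ 1) / 2) a :=
      ((hasDerivAt_pow 2 a).const_mul μ).div_const 2
    rw [h.deriv]; ring
  have hbreg : bregman P (fun t => μ * t ^ 2 / 2) rstar r
      = (μ / 2) * ∫ x, (rstar x - r x) ^ 2 ∂P := by
    rw [bregman, ← integral_const_mul]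
    refine integral_congr_ae (Filter.Eventually.of_forall fun x => ?_)
    simp only [hderiv]
    ring
  -- simplify the two risks
  have hrisk1 : sqRisk Pp Pm pr (fun x => 2 * (pr * r x) - 1)
      = pr * ∫ x, (pr * r x - 1) ^ 2 ∂Pp + (1 - pr) * ∫ x, (pr * r x) ^ 2 ∂Pm := by
    rw [sqRisk]
    congr 1
    · congr 1
      refine integral_congr_ae (Filter.Eventually.of_forall fun x => ?_); ring
    · congr 1
      refine integral_congr_ae (Filter.Eventually.of_forall fun x => ?_); ring
  have hrisk2 : sqRisk Pp Pm pr (fun x => 2 * (pr * rstar x) - 1)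
      = pr * ∫ x, (pr * rstar x - 1) ^ 2 ∂Pp + (1 - pr) * ∫ x, (pr * rstar x) ^ 2 ∂Pm := by
    rw [sqRisk]
    congr 1
    · congr 1
      refine integral_congr_ae (Filter.Eventually.of_forall fun x => ?_); ring
    · congr 1
      refine integral_congr_ae (Filter.Eventually.of_forall fun x => ?_); ring
  rw [hbreg, hrisk1, hrisk2]
  -- key pointwise identity:
  -- (pr r - 1)^2 - (pr r* - 1)^2 = ((pr r)^2 - (pr r*)^2) - 2 pr (r - r*)
  have hPp_split : ∫ x, (pr * r x - 1) ^ 2 ∂Pp - ∫ x, (pr * rstar x - 1) ^ 2 ∂Pp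
      = ∫ x, ((pr * r x) ^ 2 - (pr * rstar x) ^ 2) ∂Pp - 2 * pr * ∫ x, (r x - rstar x) ∂Pp := by
    rw [← integral_sub hf1_p hf2_p, ← integral_const_mul, ← integral_sub hD_p (hE_p.const_mul _)]
    refine integral_congr_ae (Filter.Eventually.of_forall fun x => ?_)
    ring
  have hmixD := hmixint _ hD_p hD_m
  have hEdens : ∫ x, (r x - rstar x) ∂Pp = ∫ x, rstar x * (r x - rstar x) ∂P :=
    hdens _
  -- final combination
  have hfinal : ∫ x, ((pr * r x) ^ 2 - (pr * rstar x) ^ 2) ∂P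
      - 2 * pr ^ 2 * ∫ x, rstar x * (r x - rstar x) ∂P
      = pr ^ 2 * ∫ x, (rstar x - r x) ^ 2 ∂P := by
    rw [← integral_const_mul, ← integral_const_mul, ← integral_sub hD_P (hsE_P.const_mul _)]
    refine integral_congr_ae (Filter.Eventually.of_forall fun x => ?_)
    ring
  have hμ' : μ ≠ 0 := hμ.ne'
  -- put everything together
  have goal_eq : pr * (∫ x, (pr * r x - 1) ^ 2 ∂Pp) + (1 - pr) * (∫ x, (pr * r x) ^ 2 ∂Pm)
      - (pr * (∫ x, (pr * rstar x - 1) ^ 2 ∂Pp) + (1 - pr) * (∫ x, (pr * rstar x) ^ 2 ∂Pm))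
      = pr ^ 2 * ∫ x, (rstar x - r x) ^ 2 ∂P := by
    have e1 : pr * (∫ x, (pr * r x - 1) ^ 2 ∂Pp) - pr * (∫ x, (pr * rstar x - 1) ^ 2 ∂Pp)
        = pr * (∫ x, ((pr * r x) ^ 2 - (pr * rstar x) ^ 2) ∂Pp)
          - 2 * pr ^ 2 * ∫ x, rstar x * (r x - rstar x) ∂P := by
      rw [← mul_sub, hPp_split, hEdens]; ring
    have e2 : (1 - pr) * (∫ x, (pr * r x) ^ 2 ∂Pm) - (1 - pr) * (∫ x, (pr * rstar x) ^ 2 ∂Pm)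
        = (1 - pr) * (∫ x, ((pr * r x) ^ 2 - (pr * rstar x) ^ 2) ∂Pm) := by
      rw [← mul_sub, ← integral_sub hg1_m hg2_m]
    calc pr * (∫ x, (pr * r x - 1) ^ 2 ∂Pp) + (1 - pr) * (∫ x, (pr * r x) ^ 2 ∂Pm)
        - (pr * (∫ x, (pr * rstar x - 1) ^ 2 ∂Pp) + (1 - pr) * (∫ x, (pr * rstar x) ^ 2 ∂Pm))
        = (pr * (∫ x, (pr * r x - 1) ^ 2 ∂Pp) - pr * (∫ x, (pr * rstar x - 1) ^ 2 ∂Pp))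
          + ((1 - pr) * (∫ x, (pr * r x) ^ 2 ∂Pm)
            - (1 - pr) * (∫ x, (pr * rstar x) ^ 2 ∂Pm)) := by ring
      _ = pr * (∫ x, ((pr * r x) ^ 2 - (pr * rstar x) ^ 2) ∂Pp)
          - 2 * pr ^ 2 * ∫ x, rstar x * (r x - rstar x) ∂P
          + (1 - pr) * (∫ x, ((pr * r x) ^ 2 - (pr * rstar x) ^ 2) ∂Pm) := by
          rw [e1, e2]
      _ = ∫ x, ((pr * r x) ^ 2 - (pr * rstar x) ^ 2) ∂P
          - 2 * pr ^ 2 * ∫ x, rstar x * (r x - rstar x) ∂P := by rw [hmixD]; ring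
      _ = pr ^ 2 * ∫ x, (rstar x - r x) ^ 2 ∂P := hfinal
  rw [goal_eq]
  field_simp
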